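/- Let F be a field with char(F) ≠ 2, 3, let d be a positive integer with d ≠ 2 and d ≠ 4, and let A = M_d(F) be endowed with the transpose involution A ↦ Aᵗ. Then A has exactly eight Lie skew-ideals: 0, the scalar matrices Z = F·I, the skew-symmetric matrices K, the F-linear span [S,K] of all commutators [s,k] with s symmetric and k skew-symmetric (equal to the symmetric matrices of trace zero), the symmetric matrices S, Z + K, the F-linear span [A,A] of all commutators (equal to the trace-zero matrices), and A itself. -/

import Mathlib

open Matrix
set_option linter.unreachableTactic false
set_option linter.unusedTactic false
set_option linter.unusedSectionVars false
set_option maxHeartbeats 1000000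

namespace Stmt5Aux

variable {F : Type*} [Field F] {d : ℕ}

/-- elementary matrix with a single 1 -/
abbrev EE (i j : Fin d) : Matrix (Fin d) (Fin d) F := Matrix.single i j (1 : F)

/-- skew basis element -/
def kk (i j : Fin d) : Matrix (Fin d) (Fin d) F := EE i j - EE j i

/-- symmetric basis element -/
def ss (i j : Fin d) : Matrix (Fin d) (Fin d) F := EE i j + EE j i

/-- diagonal difference -/
def hh (i j : Fin d) : Matrix (Fin d) (Fin d) F := EE i i - EE j j

/-- bracket with kk -/
def adk (p q : Fin d) (x : Matrix (Fin d) (Fin d) F) : Matrix (Fin d) (Fin d) F :=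
  kk p q * x - x * kk p q

lemma kk_transpose (p q : Fin d) : (kk p q : Matrix (Fin d) (Fin d) F)ᵀ = -(kk p q) := by
  ext a b
  simp [kk, Matrix.single, transpose_apply]
  by_cases h1 : q = a <;> by_cases h2 : p = b <;> by_cases h3 : p = a <;> by_cases h4 : q = b <;>
    simp_all <;> ring

lemma kk_apply (p q a b : Fin d) :
    (kk p q : Matrix (Fin d) (Fin d) F) a b
      = (if a = p ∧ b = q then 1 else 0) - (if a = q ∧ b = p then 1 else 0) := by
  simp [kk, Matrix.single, and_comm, eq_comm]

lemma EEmul_apply (p q : Fin d) (x : Matrix (Fin d) (Fin d) F) (a b : Fin d) :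
    ((EE p q : Matrix (Fin d) (Fin d) F) * x) a b = if a = p then x q b else 0 := by
  by_cases h : a = p
  · subst h; simp
  · simp [Matrix.single_mul_apply_of_ne _ _ _ _ _ h, h]

lemma mulEE_apply (p q : Fin d) (x : Matrix (Fin d) (Fin d) F) (a b : Fin d) :
    (x * (EE p q : Matrix (Fin d) (Fin d) F)) a b = if b = q then x a p else 0 := by
  by_cases h : b = q
  · subst h; simp
  · simp [Matrix.mul_single_apply_of_ne _ _ _ _ _ h, h]

lemma adk_apply (p q : Fin d) (x : Matrix (Fin d) (Fin d) F) (a b : Fin d) :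
    adk p q x a b = (if a = p then x q b else 0) - (if a = q then x p b else 0)
      - (if b = q then x a p else 0) + (if b = p then x a q else 0) := by
  simp only [adk, kk, sub_mul, mul_sub, Matrix.sub_apply, EEmul_apply, mulEE_apply]
  ring

lemma EE_mul_EE (i j p q : Fin d) :
    (EE i j : Matrix (Fin d) (Fin d) F) * EE p q = if j = p then EE i q else 0 := by
  by_cases h : j = p
  · subst h; simp
  · rw [Matrix.single_mul_single_of_ne 1 i j p h 1, if_neg h]

lemma sum_EE_diag (c : F) :
    (∑ i : Fin d, Matrix.single i i c) = c • (1 : Matrix (Fin d) (Fin d) F) := by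
  ext a b
  simp only [Matrix.sum_apply, Matrix.single, Matrix.smul_apply, Matrix.one_apply, of_apply]
  by_cases h : a = b
  · subst h; simp
  · rw [if_neg h, smul_zero, Finset.sum_eq_zero]
    intro i _
    rw [if_neg]
    rintro ⟨h1, h2⟩; exact h (h1.symm.trans h2)

lemma EXE1 (i j : Fin d) (l : Matrix (Fin d) (Fin d) F) :
    (EE i j : Matrix (Fin d) (Fin d) F) * l * EE i j = Matrix.single i j (l j i) := by
  ext a b
  rw [mulEE_apply, EEmul_apply]
  simp only [Matrix.single, of_apply]
  by_cases h1 : a = i <;> by_cases h2 : b = j <;> simp_all [eq_comm]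

lemma EXE2 (i j : Fin d) (l : Matrix (Fin d) (Fin d) F) :
    (EE i j : Matrix (Fin d) (Fin d) F) * l * EE j i = Matrix.single i i (l j j) := by
  ext a b
  rw [mulEE_apply, EEmul_apply]
  simp only [Matrix.single, of_apply]
  by_cases h1 : a = i <;> by_cases h2 : b = i <;> simp_all [eq_comm]

lemma sumA (l : Matrix (Fin d) (Fin d) F) :
    (∑ i : Fin d, ∑ j : Fin d, (EE i j : Matrix (Fin d) (Fin d) F) * l * EE i j) = lᵀ := by
  have : ∀ i j : Fin d, (EE i j : Matrix (Fin d) (Fin d) F) * l * EE i j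
      = Matrix.single i j (lᵀ i j) := by
    intro i j; rw [EXE1]; rfl
  simp_rw [this]
  exact (matrix_eq_sum_single lᵀ).symm

lemma sumB (l : Matrix (Fin d) (Fin d) F) :
    (∑ i : Fin d, ∑ j : Fin d, (EE i j : Matrix (Fin d) (Fin d) F) * l * EE j i)
      = l.trace • (1 : Matrix (Fin d) (Fin d) F) := by
  have : ∀ i : Fin d, (∑ j : Fin d, (EE i j : Matrix (Fin d) (Fin d) F) * l * EE j i)
      = Matrix.single i i l.trace := by
    intro i
    simp_rw [EXE2]
    ext a b
    simp only [Matrix.sum_apply, Matrix.single, of_apply, Matrix.trace, Matrix.diag]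
    by_cases h : i = a ∧ i = b <;> simp [h, Finset.sum_ite_irrel]
  simp_rw [this]
  exact sum_EE_diag _

lemma sum_kk_sq :
    (∑ i : Fin d, ∑ j : Fin d, (kk i j : Matrix (Fin d) (Fin d) F) * kk i j)
      = ((2 : F) - 2 * (d : F)) • 1 := by
  have expand : ∀ i j : Fin d, (kk i j : Matrix (Fin d) (Fin d) F) * kk i j
      = (if j = i then EE i j else 0) - EE i i - EE j j + (if i = j then EE j i else 0) := by
    intro i j
    simp only [kk, sub_mul, mul_sub, EE_mul_EE]
    abel_nf; ac_rfl
  simp_rw [expand]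
  simp only [Finset.sum_sub_distrib, Finset.sum_add_distrib]
  have h1 : (∑ i : Fin d, ∑ j : Fin d, (if j = i then (EE i j : Matrix (Fin d) (Fin d) F) else 0))
      = (1 : Matrix (Fin d) (Fin d) F) := by
    have : ∀ i : Fin d, (∑ j : Fin d, (if j = i then (EE i j : Matrix (Fin d) (Fin d) F) else 0))
        = EE i i := by intro i; simp
    simp_rw [this]
    rw [show (∑ i : Fin d, (EE i i : Matrix (Fin d) (Fin d) F)) = (1:F) • 1 from sum_EE_diag 1]
    simp
  have h4 : (∑ i : Fin d, ∑ j : Fin d, (if i = j then (EE j i : Matrix (Fin d) (Fin d) F) else 0))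
      = (1 : Matrix (Fin d) (Fin d) F) := by
    have : ∀ i : Fin d, (∑ j : Fin d, (if i = j then (EE j i : Matrix (Fin d) (Fin d) F) else 0))
        = EE i i := by intro i; simp
    simp_rw [this]
    rw [show (∑ i : Fin d, (EE i i : Matrix (Fin d) (Fin d) F)) = (1:F) • 1 from sum_EE_diag 1]
    simp
  have h2 : (∑ i : Fin d, ∑ _j : Fin d, (EE i i : Matrix (Fin d) (Fin d) F))
      = (d : F) • (1 : Matrix (Fin d) (Fin d) F) := by
    simp only [Finset.sum_const, Finset.card_univ, Fintype.card_fin]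
    rw [show (∑ i : Fin d, (d : ℕ) • (EE i i : Matrix (Fin d) (Fin d) F))
        = (d : ℕ) • ∑ i : Fin d, (EE i i : Matrix (Fin d) (Fin d) F) from
      (Finset.smul_sum).symm]
    rw [show (∑ i : Fin d, (EE i i : Matrix (Fin d) (Fin d) F)) = (1:F) • 1 from sum_EE_diag 1]
    simp [Nat.cast_smul_eq_nsmul]
  have h3 : (∑ _i : Fin d, ∑ j : Fin d, (EE j j : Matrix (Fin d) (Fin d) F))
      = (d : F) • (1 : Matrix (Fin d) (Fin d) F) := by
    rw [Finset.sum_const]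
    simp only [Finset.card_univ, Fintype.card_fin]
    rw [show (∑ j : Fin d, (EE j j : Matrix (Fin d) (Fin d) F)) = (1:F) • 1 from sum_EE_diag 1]
    simp [Nat.cast_smul_eq_nsmul]
  rw [h1, h4, h2, h3]
  module


lemma sum_kxk (l : Matrix (Fin d) (Fin d) F) :
    (∑ i : Fin d, ∑ j : Fin d, (kk i j : Matrix (Fin d) (Fin d) F) * l * kk i j)
      = (2:F) • lᵀ - (2 * l.trace) • 1 := by
  have expand : ∀ i j : Fin d, (kk i j : Matrix (Fin d) (Fin d) F) * l * kk i j
      = EE i j * l * EE i j - EE i j * l * EE j i - EE j i * l * EE i j + EE j i * l * EE j i := by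
    intro i j
    simp only [kk, sub_mul, mul_sub]
    abel
  simp_rw [expand]
  simp only [Finset.sum_sub_distrib, Finset.sum_add_distrib]
  have hC : (∑ i : Fin d, ∑ j : Fin d, (EE j i : Matrix (Fin d) (Fin d) F) * l * EE i j)
      = l.trace • (1 : Matrix (Fin d) (Fin d) F) := by
    rw [Finset.sum_comm]; exact sumB l
  have hD : (∑ i : Fin d, ∑ j : Fin d, (EE j i : Matrix (Fin d) (Fin d) F) * l * EE j i)
      = lᵀ := by
    rw [Finset.sum_comm]; exact sumA l
  rw [sumA l, sumB l, hC, hD]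
  rw [two_mul, add_smul, two_smul]
  abel

lemma omega_eq (l : Matrix (Fin d) (Fin d) F) :
    (∑ i : Fin d, ∑ j : Fin d, adk i j (adk i j l))
      = ((4:F) - 4 * (d:F)) • l - (4:F) • lᵀ + (4 * l.trace) • 1 := by
  have expand : ∀ i j : Fin d, adk i j (adk i j l)
      = kk i j * kk i j * l - kk i j * l * kk i j - kk i j * l * kk i j
        + l * (kk i j * kk i j) := by
    intro i j
    simp only [adk]
    noncomm_ring
  simp_rw [expand]
  simp only [Finset.sum_sub_distrib, Finset.sum_add_distrib]
  rw [sum_kxk l]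
  have h1 : (∑ i : Fin d, ∑ j : Fin d, (kk i j : Matrix (Fin d) (Fin d) F) * kk i j * l)
      = (((2:F) - 2*(d:F)) • (1 : Matrix (Fin d) (Fin d) F)) * l := by
    rw [← sum_kk_sq]
    simp_rw [← Finset.sum_mul]
  have h2 : (∑ i : Fin d, ∑ j : Fin d, l * ((kk i j : Matrix (Fin d) (Fin d) F) * kk i j))
      = l * (((2:F) - 2*(d:F)) • (1 : Matrix (Fin d) (Fin d) F)) := by
    rw [← sum_kk_sq]
    simp_rw [← Finset.mul_sum]
  rw [h1, h2]
  rw [smul_mul_assoc, one_mul, mul_smul_comm, mul_one]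
  module


lemma kk_swap (x y : Fin d) : (kk y x : Matrix (Fin d) (Fin d) F) = -(kk x y) := by
  simp [kk]

lemma kk_self (x : Fin d) : (kk x x : Matrix (Fin d) (Fin d) F) = 0 := by simp [kk]

lemma ss_comm (x y : Fin d) : (ss x y : Matrix (Fin d) (Fin d) F) = ss y x := by
  simp [ss, add_comm]

lemma hh_self (x : Fin d) : (hh x x : Matrix (Fin d) (Fin d) F) = 0 := by simp [hh]

lemma ss_apply (x y a b : Fin d) :
    (ss x y : Matrix (Fin d) (Fin d) F) a b
      = (if a = x ∧ b = y then (1:F) else 0) + (if a = y ∧ b = x then 1 else 0) := by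
  simp [ss, Matrix.single, and_comm, eq_comm]

lemma hh_apply (x y a b : Fin d) :
    (hh x y : Matrix (Fin d) (Fin d) F) a b
      = (if a = x ∧ b = x then (1:F) else 0) - (if a = y ∧ b = y then 1 else 0) := by
  simp [hh, Matrix.single, and_comm, eq_comm]

lemma EE_transpose (i j : Fin d) : (EE i j : Matrix (Fin d) (Fin d) F)ᵀ = EE j i := by
  ext a b
  simp [Matrix.single, transpose_apply, and_comm]

lemma ss_transpose (x y : Fin d) : (ss x y : Matrix (Fin d) (Fin d) F)ᵀ = ss x y := by
  simp only [ss, transpose_add, EE_transpose]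
  abel


lemma skew_apply {x : Matrix (Fin d) (Fin d) F} (hx : xᵀ = -x) (a b : Fin d) :
    x b a = - x a b := by
  have := congrFun (congrFun hx a) b
  simpa [transpose_apply] using this

lemma skew_diag (h2 : (2:F) ≠ 0) {x : Matrix (Fin d) (Fin d) F} (hx : xᵀ = -x) (a : Fin d) :
    x a a = 0 := by
  have h := skew_apply hx a a
  have h' : (2:F) * x a a = 0 := by linear_combination h
  exact (mul_eq_zero.mp h').resolve_left h2

lemma sym_apply {x : Matrix (Fin d) (Fin d) F} (hx : xᵀ = x) (a b : Fin d) :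
    x b a = x a b := by
  have := congrFun (congrFun hx a) b
  simpa [transpose_apply] using this

lemma adk_skew (p q : Fin d) {x : Matrix (Fin d) (Fin d) F} (hx : xᵀ = -x) :
    (adk p q x)ᵀ = -(adk p q x) := by
  simp only [adk, transpose_sub, transpose_mul, hx, kk_transpose]
  simp [mul_neg, neg_mul]
  try abel

lemma adk_symm (p q : Fin d) {x : Matrix (Fin d) (Fin d) F} (hx : xᵀ = x) :
    (adk p q x)ᵀ = adk p q x := by
  simp only [adk, transpose_sub, transpose_mul, hx, kk_transpose]
  simp [mul_neg, neg_mul]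
  try abel

lemma adk_add (p q : Fin d) (x y : Matrix (Fin d) (Fin d) F) :
    adk p q (x + y) = adk p q x + adk p q y := by
  simp only [adk, mul_add, add_mul]
  abel

lemma adk_smul (p q : Fin d) (c : F) (x : Matrix (Fin d) (Fin d) F) :
    adk p q (c • x) = c • adk p q x := by
  simp only [adk, mul_smul_comm, smul_mul_assoc, smul_sub]

lemma adk_neg (p q : Fin d) (x : Matrix (Fin d) (Fin d) F) :
    adk p q (-x) = -(adk p q x) := by
  simp only [adk, mul_neg, neg_mul, neg_sub]
  abel

lemma adk_one (p q : Fin d) (c : F) :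
    adk p q (c • (1 : Matrix (Fin d) (Fin d) F)) = 0 := by
  simp [adk, mul_smul_comm, smul_mul_assoc]

section Brackets

variable {x y z : Fin d}

lemma br_kk (hxy : x ≠ y) (hyz : y ≠ z) (hxz : x ≠ z) :
    adk x y (kk y z : Matrix (Fin d) (Fin d) F) = kk x z := by
  simp only [adk, kk, sub_mul, mul_sub, EE_mul_EE, if_pos rfl, if_neg hxy.symm,
    if_neg hyz.symm, if_neg hxz.symm, if_neg hxy, if_neg hyz, if_neg hxz]
  abel

lemma br_ks (hxy : x ≠ y) (hyz : y ≠ z) (hxz : x ≠ z) :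
    adk x y (ss x z : Matrix (Fin d) (Fin d) F) = -(ss y z) := by
  simp only [adk, kk, ss, sub_mul, mul_sub, add_mul, mul_add, EE_mul_EE, if_pos rfl,
    if_neg hxy.symm, if_neg hyz.symm, if_neg hxz.symm, if_neg hxy, if_neg hyz, if_neg hxz]
  abel

lemma br_kss (hxy : x ≠ y) :
    adk x y (ss x y : Matrix (Fin d) (Fin d) F) = (2:F) • hh x y := by
  simp only [adk, kk, ss, hh, sub_mul, mul_sub, add_mul, mul_add, EE_mul_EE, if_pos rfl,
    if_neg hxy.symm, if_neg hxy, two_smul, smul_sub]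
  abel_nf; ac_rfl

lemma br_kh (hxy : x ≠ y) (hyz : y ≠ z) (hxz : x ≠ z) :
    adk x y (hh z x : Matrix (Fin d) (Fin d) F) = ss x y := by
  simp only [adk, kk, ss, hh, sub_mul, mul_sub, EE_mul_EE, if_pos rfl,
    if_neg hxy.symm, if_neg hyz.symm, if_neg hxz.symm, if_neg hxy, if_neg hyz, if_neg hxz,
    if_neg hyz.symm]
  abel_nf; ac_rfl

lemma br_kk2 (hxy : x ≠ y) (hyz : y ≠ z) (hxz : x ≠ z) :
    adk x y (kk x z : Matrix (Fin d) (Fin d) F) = -(kk y z) := by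
  simp only [adk, kk, sub_mul, mul_sub, EE_mul_EE, if_pos rfl, if_neg hxy.symm,
    if_neg hyz.symm, if_neg hxz.symm, if_neg hxy, if_neg hyz, if_neg hxz, if_neg hyz.symm]
  abel

lemma br_kk0 {u : Fin d} (hzx : z ≠ x) (hzy : z ≠ y) (hux : u ≠ x) (huy : u ≠ y) :
    adk x y (kk z u : Matrix (Fin d) (Fin d) F) = 0 := by
  simp only [adk, kk, sub_mul, mul_sub, EE_mul_EE, if_neg hzx.symm, if_neg hzy.symm,
    if_neg hux.symm, if_neg huy.symm, if_neg hzx, if_neg hzy, if_neg hux, if_neg huy]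
  abel

end Brackets

lemma T_skew_apply (p q : Fin d) (hpq : p ≠ q) (h2 : (2:F) ≠ 0)
    {x : Matrix (Fin d) (Fin d) F} (hx : xᵀ = -x) (a b : Fin d) :
    adk p q (adk p q x) a b
      = -(((if a = p ∨ a = q then (1:F) else 0) + (if b = p ∨ b = q then 1 else 0)) * x a b)
        + ((if a = p ∧ b = q then 2 * x p q else 0) - (if a = q ∧ b = p then 2 * x p q else 0)) := by
  have e1 : x p p = 0 := skew_diag h2 hx p
  have e2 : x q q = 0 := skew_diag h2 hx q
  have e3 : x q p = -(x p q) := skew_apply hx p q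
  have hqp : q ≠ p := hpq.symm
  simp only [adk_apply]
  by_cases hap : a = p <;> by_cases haq : a = q <;>
    by_cases hbp : b = p <;> by_cases hbq : b = q <;>
    simp_all <;> try ring

lemma T_sym_apply (p q : Fin d) (hpq : p ≠ q)
    {x : Matrix (Fin d) (Fin d) F} (hx : xᵀ = x) (a b : Fin d) :
    adk p q (adk p q x) a b
      = -(((if a = p ∨ a = q then (1:F) else 0) + (if b = p ∨ b = q then 1 else 0)) * x a b)
        + (-(if a = p ∧ b = q then 2 * x p q else 0) - (if a = q ∧ b = p then 2 * x p q else 0)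
           + (if a = p ∧ b = p then 2 * x q q else 0) + (if a = q ∧ b = q then 2 * x p p else 0)) := by
  have e3 : x q p = x p q := sym_apply hx p q
  have hqp : q ≠ p := hpq.symm
  simp only [adk_apply]
  by_cases hap : a = p <;> by_cases haq : a = q <;>
    by_cases hbp : b = p <;> by_cases hbq : b = q <;>
    simp_all <;> try ring

section Chain

variable {w : Matrix (Fin d) (Fin d) F}

lemma chain_d3 (p q r : Fin d) (hpq : p ≠ q) (hpr : p ≠ r) (hqr : q ≠ r)
    (hall : ∀ c : Fin d, c = p ∨ c = q ∨ c = r)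
    (h2 : (2:F) ≠ 0) (hx : wᵀ = -w) :
    w + adk p q (adk p q w) = (w p q) • kk p q := by
  have e1 : w p p = 0 := skew_diag h2 hx p
  have e2 : w q q = 0 := skew_diag h2 hx q
  have e3 : w r r = 0 := skew_diag h2 hx r
  have e12 : w q p = -(w p q) := skew_apply hx p q
  have e13 : w r p = -(w p r) := skew_apply hx p r
  have e23 : w r q = -(w q r) := skew_apply hx q r
  have hqp : q ≠ p := hpq.symm
  have hrp : r ≠ p := hpr.symm
  have hrq : r ≠ q := hqr.symm
  ext a b
  rw [Matrix.add_apply, T_skew_apply p q hpq h2 hx, Matrix.smul_apply, kk_apply]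
  rcases hall a with ha | ha | ha <;> rcases hall b with hb | hb | hb <;>
    subst ha <;> subst hb <;>
    simp_all <;> try ring

lemma chain_d5 (p q r r' r'' : Fin d) (hpq : p ≠ q) (hpr : p ≠ r) (hpr' : p ≠ r')
    (hpr'' : p ≠ r'') (hqr : q ≠ r) (hqr' : q ≠ r') (hqr'' : q ≠ r'')
    (hrr' : r ≠ r') (hrr'' : r ≠ r'') (hr'r'' : r' ≠ r'')
    (h2 : (2:F) ≠ 0) (hx : wᵀ = -w) :
    -(adk p r'' (adk p r''
      (-(adk p r' (adk p r'
        (-(adk p r (adk p r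
          (w + adk p q (adk p q w)))))))))) = (w p q) • kk p q := by
  have e1 : w p p = 0 := skew_diag h2 hx p
  have e2 : w q q = 0 := skew_diag h2 hx q
  have er : w r r = 0 := skew_diag h2 hx r
  have er' : w r' r' = 0 := skew_diag h2 hx r'
  have er'' : w r'' r'' = 0 := skew_diag h2 hx r''
  have e3 : w q p = -(w p q) := skew_apply hx p q
  have e4 : w r' r = -(w r r') := skew_apply hx r r'
  have hqp : q ≠ p := hpq.symm
  have hrp : r ≠ p := hpr.symm
  have hr'p : r' ≠ p := hpr'.symm
  have hr''p : r'' ≠ p := hpr''.symm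
  have hrq : r ≠ q := hqr.symm
  have hr'q : r' ≠ q := hqr'.symm
  have hr''q : r'' ≠ q := hqr''.symm
  have hr'r : r' ≠ r := hrr'.symm
  have hr''r : r'' ≠ r := hrr''.symm
  have hr''r' : r'' ≠ r' := hr'r''.symm
  set M1 := w + adk p q (adk p q w) with hM1
  have hM1skew : M1ᵀ = -M1 := by
    rw [hM1, transpose_add, adk_skew p q (adk_skew p q hx), hx]; abel
  have hM1apply : ∀ a b, M1 a b =
      (if a = p ∧ b = q then w p q else if a = q ∧ b = p then -(w p q)
        else if a = p ∨ a = q ∨ b = p ∨ b = q then 0 else w a b) := by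
    intro a b
    rw [hM1, Matrix.add_apply, T_skew_apply p q hpq h2 hx]
    by_cases hap : a = p <;> by_cases haq : a = q <;>
      by_cases hbp : b = p <;> by_cases hbq : b = q <;>
      simp_all <;> try ring
  set M2 := -(adk p r (adk p r M1)) with hM2
  have hM2skew : M2ᵀ = -M2 := by
    rw [hM2, transpose_neg, adk_skew p r (adk_skew p r hM1skew)]
  have hM2apply : ∀ a b, M2 a b =
      (if a = p ∧ b = q then w p q else if a = q ∧ b = p then -(w p q)
        else if (a = r ∨ b = r) ∧ ¬(a = p ∨ a = q ∨ b = p ∨ b = q) then w a b else 0) := by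
    intro a b
    rw [hM2, Matrix.neg_apply, T_skew_apply p r hpr h2 hM1skew,
      hM1apply a b, hM1apply p r]
    by_cases hap : a = p <;> by_cases haq : a = q <;> by_cases har : a = r <;>
      by_cases hbp : b = p <;> by_cases hbq : b = q <;> by_cases hbr : b = r <;>
      simp [hap, haq, har, hbp, hbq, hbr, hpq, hqp, hpr, hrp, hqr, hrq,
        e1, e2, er, e3] <;> try ring
  have hM3 : -(adk p r' (adk p r' M2)) = (w p q) • kk p q + (w r r') • kk r r' := by
    ext a b
    rw [Matrix.neg_apply, T_skew_apply p r' hpr' h2 hM2skew, hM2apply a b, hM2apply p r',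
      Matrix.add_apply, Matrix.smul_apply, Matrix.smul_apply, kk_apply, kk_apply]
    by_cases hap : a = p <;> by_cases haq : a = q <;> by_cases har : a = r <;>
      by_cases har' : a = r' <;>
      by_cases hbp : b = p <;> by_cases hbq : b = q <;> by_cases hbr : b = r <;>
      by_cases hbr' : b = r' <;>
      simp [hap, haq, har, har', hbp, hbq, hbr, hbr', hpq, hqp, hpr, hrp, hpr', hr'p,
        hqr, hrq, hqr', hr'q, hrr', hr'r, e1, e2, er, er', e3, e4] <;> try ring
  rw [hM3]
  have b1 : adk p r'' (kk p q : Matrix (Fin d) (Fin d) F) = -(kk r'' q) :=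
    br_kk2 hpr'' hr''q hpq
  have b2 : adk p r'' (kk r r' : Matrix (Fin d) (Fin d) F) = 0 :=
    br_kk0 hrp hrr'' hr'p hr'r''
  have b3 : adk p r'' (kk r'' q : Matrix (Fin d) (Fin d) F) = kk p q :=
    br_kk hpr'' hr''q hpq
  rw [adk_add, adk_smul, adk_smul, b1, b2, smul_zero, add_zero, adk_smul, adk_neg, b3]
  simp

end Chain

lemma sym_project (p q : Fin d) (hpq : p ≠ q) {x : Matrix (Fin d) (Fin d) F} (hx : xᵀ = x) :
    adk p q (adk p q (adk p q (adk p q x) + x))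
      = (12 * x p q) • ss p q + (6 * (x p p - x q q)) • hh p q := by
  have hTx : (adk p q (adk p q x))ᵀ = adk p q (adk p q x) := adk_symm _ _ (adk_symm _ _ hx)
  have hy : (adk p q (adk p q x) + x)ᵀ = adk p q (adk p q x) + x := by
    rw [transpose_add, hTx, hx]
  have e3 : x q p = x p q := sym_apply hx p q
  have hqp : q ≠ p := hpq.symm
  ext a b
  rw [T_sym_apply p q hpq hy a b]
  simp only [Matrix.add_apply]
  rw [T_sym_apply p q hpq hx a b, T_sym_apply p q hpq hx p q, T_sym_apply p q hpq hx p p,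
    T_sym_apply p q hpq hx q q, Matrix.smul_apply, Matrix.smul_apply, ss_apply, hh_apply]
  by_cases hap : a = p <;> by_cases haq : a = q <;>
    by_cases hbp : b = p <;> by_cases hbq : b = q <;>
    simp [hap, haq, hbp, hbq, hpq, hqp, e3] <;> try ring

lemma sum_smul_EE_eq (w : Matrix (Fin d) (Fin d) F) :
    (∑ x : Fin d, ∑ y : Fin d, w x y • (EE x y : Matrix (Fin d) (Fin d) F)) = w := by
  have : ∀ x y : Fin d, w x y • (EE x y : Matrix (Fin d) (Fin d) F)
      = Matrix.single x y (w x y) := by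
    intro x y; rw [smul_single, smul_eq_mul, mul_one]
  simp_rw [this]
  exact (matrix_eq_sum_single w).symm

lemma sum_smul_EE_swap_eq (w : Matrix (Fin d) (Fin d) F) :
    (∑ x : Fin d, ∑ y : Fin d, w x y • (EE y x : Matrix (Fin d) (Fin d) F)) = wᵀ := by
  rw [Finset.sum_comm]
  have : ∀ y x : Fin d, w x y • (EE y x : Matrix (Fin d) (Fin d) F)
      = Matrix.single y x (wᵀ y x) := by
    intro x y; rw [smul_single, smul_eq_mul, mul_one]; rfl
  simp_rw [this]
  exact (matrix_eq_sum_single wᵀ).symm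

lemma sum_smul_kk_eq (w : Matrix (Fin d) (Fin d) F) :
    (∑ x : Fin d, ∑ y : Fin d, w x y • (kk x y : Matrix (Fin d) (Fin d) F)) = w - wᵀ := by
  have : ∀ x y : Fin d, w x y • (kk x y : Matrix (Fin d) (Fin d) F)
      = w x y • (EE x y : Matrix (Fin d) (Fin d) F) - w x y • (EE y x : Matrix (Fin d) (Fin d) F) := by
    intro x y; rw [kk, smul_sub]
  simp_rw [this, Finset.sum_sub_distrib]
  rw [sum_smul_EE_eq, sum_smul_EE_swap_eq]

lemma sum_smul_ss_eq (w : Matrix (Fin d) (Fin d) F) :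
    (∑ x : Fin d, ∑ y : Fin d, w x y • (ss x y : Matrix (Fin d) (Fin d) F)) = w + wᵀ := by
  have : ∀ x y : Fin d, w x y • (ss x y : Matrix (Fin d) (Fin d) F)
      = w x y • (EE x y : Matrix (Fin d) (Fin d) F) + w x y • (EE y x : Matrix (Fin d) (Fin d) F) := by
    intro x y; rw [ss, smul_add]
  simp_rw [this, Finset.sum_add_distrib]
  rw [sum_smul_EE_eq, sum_smul_EE_swap_eq]

lemma offdiag_split (f : Fin d → Fin d → Matrix (Fin d) (Fin d) F) :
    (∑ x : Fin d, ∑ y : Fin d, f x y)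
      = (∑ x : Fin d, ∑ y : Fin d, if x = y then 0 else f x y) + ∑ x : Fin d, f x x := by
  rw [← Finset.sum_add_distrib]
  refine Finset.sum_congr rfl fun x _ => ?_
  have : ∀ y : Fin d, f x y = (if x = y then 0 else f x y) + (if x = y then f x y else 0) := by
    intro y; by_cases h : x = y <;> simp [h]
  rw [Finset.sum_congr rfl fun y _ => this y, Finset.sum_add_distrib]
  congr 1
  simp

lemma sum_diag_smul_hh (i0 : Fin d) (w : Matrix (Fin d) (Fin d) F) :
    (∑ x : Fin d, w x x • (hh i0 x : Matrix (Fin d) (Fin d) F))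
      = w.trace • (EE i0 i0 : Matrix (Fin d) (Fin d) F)
        - ∑ x : Fin d, w x x • (EE x x : Matrix (Fin d) (Fin d) F) := by
  have : ∀ x : Fin d, w x x • (hh i0 x : Matrix (Fin d) (Fin d) F)
      = w x x • (EE i0 i0 : Matrix (Fin d) (Fin d) F) - w x x • (EE x x : Matrix (Fin d) (Fin d) F) := by
    intro x; rw [hh, smul_sub]
  simp_rw [this, Finset.sum_sub_distrib, ← Finset.sum_smul]
  rfl

lemma exists_notin (s : Finset (Fin d)) (hs : s.card < d) : ∃ r : Fin d, r ∉ s := by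
  by_contra h
  push_neg at h
  have : (Finset.univ : Finset (Fin d)) ⊆ s := fun x _ => h x
  have := Finset.card_le_card this
  simp only [Finset.card_univ, Fintype.card_fin] at this
  omega

lemma scalar_of_entries {x : Matrix (Fin d) (Fin d) F} (hd : 0 < d)
    (h : ∀ p q : Fin d, p ≠ q → x p q = 0 ∧ x p p = x q q) :
    ∃ c : F, x = c • 1 := by
  refine ⟨x ⟨0, hd⟩ ⟨0, hd⟩, ?_⟩
  ext a b
  by_cases hab : a = b
  · subst hab
    by_cases h0 : a = ⟨0, hd⟩
    · subst h0; simp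
    · rw [(h a ⟨0, hd⟩ h0).2]; simp
  · rw [(h a b hab).1]; simp [Matrix.one_apply, hab]

lemma matrix_exists_entry_ne {x : Matrix (Fin d) (Fin d) F} (hx : x ≠ 0) :
    ∃ a b, x a b ≠ 0 := by
  by_contra h
  push_neg at h
  exact hx (by ext a b; simp [h a b])

section Main

variable {L : Submodule F (Matrix (Fin d) (Fin d) F)}

/-- closure of a Lie skew-ideal under `adk` -/
lemma adk_mem (hL : ∀ l ∈ L, ∀ k : Matrix (Fin d) (Fin d) F, kᵀ = -k → l * k - k * l ∈ L)
    {l} (hl : l ∈ L) (p q : Fin d) : adk p q l ∈ L := by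
  have h := hL l hl (kk p q) (kk_transpose p q)
  have h2 := L.neg_mem h
  rw [neg_sub] at h2
  exact h2

lemma tau_mem (h4 : (4:F) ≠ 0)
    (hL : ∀ l ∈ L, ∀ k : Matrix (Fin d) (Fin d) F, kᵀ = -k → l * k - k * l ∈ L)
    {l} (hl : l ∈ L) : lᵀ - l.trace • 1 ∈ L := by
  have hsum : (∑ i : Fin d, ∑ j : Fin d, adk i j (adk i j l)) ∈ L :=
    Submodule.sum_mem _ fun i _ => Submodule.sum_mem _ fun j _ =>
      adk_mem hL (adk_mem hL hl i j) i j
  rw [omega_eq] at hsum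
  have h1 : (4:F)⁻¹ • (((4:F) - 4 * (d:F)) • l - (4:F) • lᵀ + (4 * l.trace) • 1) ∈ L :=
    L.smul_mem _ hsum
  have h2 : ((1:F) - (d:F)) • l ∈ L := L.smul_mem _ hl
  have key : lᵀ - l.trace • 1
      = ((1:F) - (d:F)) • l
        - (4:F)⁻¹ • (((4:F) - 4 * (d:F)) • l - (4:F) • lᵀ + (4 * l.trace) • 1) := by
    match_scalars <;> field_simp <;> ring
  rw [key]
  exact L.sub_mem h2 h1

/-- from one off-diagonal `kk` in `L`, all are -/
lemma kk_all_mem (hL : ∀ l ∈ L, ∀ k : Matrix (Fin d) (Fin d) F, kᵀ = -k → l * k - k * l ∈ L)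
    {a b : Fin d} (hab : a ≠ b) (h : (kk a b : Matrix (Fin d) (Fin d) F) ∈ L) :
    ∀ x y : Fin d, (kk x y : Matrix (Fin d) (Fin d) F) ∈ L := by
  have hba : (kk b a : Matrix (Fin d) (Fin d) F) ∈ L := by
    rw [kk_swap]; exact L.neg_mem h
  -- move one index
  have step1 : ∀ y, y ≠ a → y ≠ b → (kk y b : Matrix (Fin d) (Fin d) F) ∈ L := by
    intro y hya hyb
    have := adk_mem hL h y a
    rwa [br_kk hya hab hyb] at this
  have step2 : ∀ y, y ≠ a → y ≠ b → (kk y a : Matrix (Fin d) (Fin d) F) ∈ L := by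
    intro y hya hyb
    have := adk_mem hL hba y b
    rwa [br_kk hyb hab.symm hya] at this
  intro x y
  by_cases hxy : x = y
  · rw [hxy, kk_self]; exact L.zero_mem
  by_cases hxa : x = a
  · by_cases hyb : y = b
    · rw [hxa, hyb]; exact h
    · have hya : y ≠ a := fun hh => hxy (hxa.trans hh.symm)
      have h1 : (kk y a : Matrix (Fin d) (Fin d) F) ∈ L := step2 y hya hyb
      have h2 := L.neg_mem h1
      rw [← kk_swap y a] at h2
      rw [hxa]; exact h2
  by_cases hxb : x = b
  · by_cases hya : y = a
    · rw [hxb, hya]; exact hba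
    · have hyb : y ≠ b := fun hh => hxy (hxb.trans hh.symm)
      have h1 : (kk y b : Matrix (Fin d) (Fin d) F) ∈ L := step1 y hya hyb
      have h2 := L.neg_mem h1
      rw [← kk_swap y b] at h2
      rw [hxb]; exact h2
  · by_cases hya : y = a
    · rw [hya]; exact step2 x hxa hxb
    by_cases hyb : y = b
    · rw [hyb]; exact step1 x hxa hxb
    · have h1 : (kk y a : Matrix (Fin d) (Fin d) F) ∈ L := step2 y hya hyb
      have h2 := L.neg_mem h1
      rw [← kk_swap y a] at h2
      have h3 := adk_mem hL h2 x a
      rwa [br_kk hxa (fun hh => hya hh.symm) hxy] at h3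

lemma skew_all_mem (h2 : (2:F) ≠ 0)
    (hkk : ∀ x y : Fin d, (kk x y : Matrix (Fin d) (Fin d) F) ∈ L) :
    ∀ w : Matrix (Fin d) (Fin d) F, wᵀ = -w → w ∈ L := by
  intro w hw
  have hsum : (∑ x : Fin d, ∑ y : Fin d, w x y • (kk x y : Matrix (Fin d) (Fin d) F)) ∈ L :=
    Submodule.sum_mem _ fun x _ => Submodule.sum_mem _ fun y _ => L.smul_mem _ (hkk x y)
  rw [sum_smul_kk_eq, hw, sub_neg_eq_add] at hsum
  have := L.smul_mem (2:F)⁻¹ hsum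
  rwa [show (2:F)⁻¹ • (w + w) = w by rw [← two_smul F w, smul_smul, inv_mul_cancel₀ h2, one_smul]]
    at this

lemma ss_all_mem (hL : ∀ l ∈ L, ∀ k : Matrix (Fin d) (Fin d) F, kᵀ = -k → l * k - k * l ∈ L)
    {a b : Fin d} (hab : a ≠ b) (h : (ss a b : Matrix (Fin d) (Fin d) F) ∈ L) :
    ∀ x y : Fin d, x ≠ y → (ss x y : Matrix (Fin d) (Fin d) F) ∈ L := by
  have hba : (ss b a : Matrix (Fin d) (Fin d) F) ∈ L := by rwa [ss_comm b a]
  have step1 : ∀ y, y ≠ a → y ≠ b → (ss y b : Matrix (Fin d) (Fin d) F) ∈ L := by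
    -- adk a y (ss a b) = -(ss y b)
    intro y hya hyb
    have := adk_mem hL h a y
    rw [br_ks (Ne.symm hya) hyb hab] at this
    have := L.neg_mem this
    rwa [neg_neg] at this
  have step2 : ∀ y, y ≠ a → y ≠ b → (ss y a : Matrix (Fin d) (Fin d) F) ∈ L := by
    intro y hya hyb
    have := adk_mem hL hba b y
    rw [br_ks (Ne.symm hyb) hya hab.symm] at this
    have := L.neg_mem this
    rwa [neg_neg] at this
  intro x y hxy
  by_cases hxa : x = a
  · subst hxa
    by_cases hyb : y = b
    · subst hyb; exact h
    · have := step2 y (Ne.symm hxy) hyb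
      rwa [ss_comm] at this
  by_cases hxb : x = b
  · subst hxb
    by_cases hya : y = a
    · subst hya; exact hba
    · have := step1 y hya (Ne.symm hxy)
      rwa [ss_comm] at this
  · by_cases hya : y = a
    · subst hya; exact step2 x hxa hxb
    by_cases hyb : y = b
    · subst hyb; exact step1 x hxa hxb
    · -- both outside
      have hxaL : (ss x a : Matrix (Fin d) (Fin d) F) ∈ L := step2 x hxa hxb
      rw [ss_comm] at hxaL
      have h2 := adk_mem hL hxaL a y
      rw [br_ks (Ne.symm hya) (Ne.symm hxy) (Ne.symm hxa)] at h2
      have h3 := L.neg_mem h2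
      rw [neg_neg] at h3
      rwa [ss_comm] at h3

/-- spanning: symmetric trace-zero matrices from `ss` and `hh` generators -/
lemma sym0_span_mem (h2 : (2:F) ≠ 0) (hd : 0 < d) {M : Submodule F (Matrix (Fin d) (Fin d) F)}
    (hss : ∀ x y : Fin d, x ≠ y → (ss x y : Matrix (Fin d) (Fin d) F) ∈ M)
    (hhh : ∀ x y : Fin d, (hh x y : Matrix (Fin d) (Fin d) F) ∈ M)
    {u : Matrix (Fin d) (Fin d) F} (hu : uᵀ = u) (htr : u.trace = 0) : u ∈ M := by
  set i0 : Fin d := ⟨0, hd⟩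
  have key : u = (2:F)⁻¹ • (∑ x : Fin d, ∑ y : Fin d,
        if x = y then 0 else u x y • (ss x y : Matrix (Fin d) (Fin d) F))
      - ∑ x : Fin d, u x x • (hh i0 x : Matrix (Fin d) (Fin d) F) := by
    have hsplit := offdiag_split (fun x y => u x y • (ss x y : Matrix (Fin d) (Fin d) F))
    rw [sum_smul_ss_eq, hu] at hsplit
    have hdiag : ∀ x : Fin d, u x x • (ss x x : Matrix (Fin d) (Fin d) F)
        = (2:F) • (u x x • (EE x x : Matrix (Fin d) (Fin d) F)) := by
      intro x; rw [ss, two_smul, smul_add]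
    have hoff : (∑ x : Fin d, ∑ y : Fin d,
          if x = y then 0 else u x y • (ss x y : Matrix (Fin d) (Fin d) F))
        = (2:F) • u - (2:F) • (∑ x : Fin d, u x x • (EE x x : Matrix (Fin d) (Fin d) F)) := by
      have := hsplit
      rw [Finset.sum_congr rfl (fun x _ => hdiag x), ← Finset.smul_sum] at this
      rw [two_smul]
      -- this : u + u = offdiag + 2 • Σ diag
      rw [eq_sub_iff_add_eq, ← this]
    rw [hoff, sum_diag_smul_hh, htr, zero_smul, zero_sub]
    match_scalars <;> field_simp <;> ring
  rw [key]
  refine M.sub_mem (M.smul_mem _ (Submodule.sum_mem _ fun x _ => Submodule.sum_mem _ fun y _ => ?_))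
    (Submodule.sum_mem _ fun x _ => M.smul_mem _ (hhh i0 x))
  by_cases hxy : x = y
  · rw [if_pos hxy]; exact M.zero_mem
  · rw [if_neg hxy]; exact M.smul_mem _ (hss x y hxy)

/-- spanning: trace-zero matrices from `EE` (off-diagonal) and `hh` generators -/
lemma sl_span_mem (hd : 0 < d) {M : Submodule F (Matrix (Fin d) (Fin d) F)}
    (hEE : ∀ x y : Fin d, x ≠ y → (EE x y : Matrix (Fin d) (Fin d) F) ∈ M)
    (hhh : ∀ x y : Fin d, (hh x y : Matrix (Fin d) (Fin d) F) ∈ M)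
    {u : Matrix (Fin d) (Fin d) F} (htr : u.trace = 0) : u ∈ M := by
  set i0 : Fin d := ⟨0, hd⟩
  have key : u = (∑ x : Fin d, ∑ y : Fin d,
        if x = y then 0 else u x y • (EE x y : Matrix (Fin d) (Fin d) F))
      - ∑ x : Fin d, u x x • (hh i0 x : Matrix (Fin d) (Fin d) F) := by
    have hsplit := offdiag_split (fun x y => u x y • (EE x y : Matrix (Fin d) (Fin d) F))
    rw [sum_smul_EE_eq] at hsplit
    rw [sum_diag_smul_hh, htr, zero_smul, zero_sub, sub_neg_eq_add, ← hsplit]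
  rw [key]
  refine M.sub_mem (Submodule.sum_mem _ fun x _ => Submodule.sum_mem _ fun y _ => ?_)
    (Submodule.sum_mem _ fun x _ => M.smul_mem _ (hhh i0 x))
  by_cases hxy : x = y
  · rw [if_pos hxy]; exact M.zero_mem
  · rw [if_neg hxy]; exact M.smul_mem _ (hEE x y hxy)

lemma hh_all_mem (h2 : (2:F) ≠ 0)
    (hL : ∀ l ∈ L, ∀ k : Matrix (Fin d) (Fin d) F, kᵀ = -k → l * k - k * l ∈ L)
    (hss : ∀ x y : Fin d, x ≠ y → (ss x y : Matrix (Fin d) (Fin d) F) ∈ L) :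
    ∀ x y : Fin d, (hh x y : Matrix (Fin d) (Fin d) F) ∈ L := by
  intro x y
  by_cases hxy : x = y
  · rw [hxy, hh_self]; exact L.zero_mem
  · have := adk_mem hL (hss x y hxy) x y
    rw [br_kss hxy] at this
    have h3 := L.smul_mem (2:F)⁻¹ this
    rwa [smul_smul, inv_mul_cancel₀ h2, one_smul] at h3

/-- extraction of an `ss` generator from a nonscalar symmetric element of `L` -/
lemma extract_ss (h2 : (2:F) ≠ 0) (h12 : (12:F) ≠ 0) (h6 : (6:F) ≠ 0) (hd2 : d ≠ 2)
    (hL : ∀ l ∈ L, ∀ k : Matrix (Fin d) (Fin d) F, kᵀ = -k → l * k - k * l ∈ L)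
    {x : Matrix (Fin d) (Fin d) F} (hxL : x ∈ L) (hx : xᵀ = x)
    {p q : Fin d} (hpq : p ≠ q) (hne : x p q ≠ 0 ∨ x p p ≠ x q q) :
    ∃ a b : Fin d, a ≠ b ∧ (ss a b : Matrix (Fin d) (Fin d) F) ∈ L := by
  -- find a third index
  have hd3 : 3 ≤ d := by
    have h1 : 1 < Fintype.card (Fin d) := Fintype.one_lt_card_iff_nontrivial.2 ⟨⟨p, q, hpq⟩⟩
    rw [Fintype.card_fin] at h1
    omega
  obtain ⟨r, hr⟩ := exists_notin {p, q} (by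
    have : ({p, q} : Finset (Fin d)).card ≤ 2 := by
      apply le_trans (Finset.card_insert_le _ _); simp
    omega)
  have hrp : r ≠ p := fun hh => hr (by simp [hh])
  have hrq : r ≠ q := fun hh => hr (by simp [hh])
  -- v = T(T+1)x ∈ L
  have hvL : adk p q (adk p q (adk p q (adk p q x) + x)) ∈ L := by
    apply adk_mem hL
    apply adk_mem hL
    exact L.add_mem (adk_mem hL (adk_mem hL hxL p q) p q) hxL
  rw [sym_project p q hpq hx] at hvL
  set α : F := 12 * x p q with hα
  set β : F := 6 * (x p p - x q q) with hβ
  -- y = adk q r v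
  have hyL := adk_mem hL hvL q r
  rw [adk_add, adk_smul, adk_smul] at hyL
  have hb1 : adk q r (ss p q : Matrix (Fin d) (Fin d) F) = -(ss r p) := by
    rw [ss_comm p q]
    exact br_ks hrq.symm hrp hpq.symm
  have hb2 : adk q r (hh p q : Matrix (Fin d) (Fin d) F) = ss q r :=
    br_kh hrq.symm hrp hpq.symm
  rw [hb1, hb2] at hyL
  set y : Matrix (Fin d) (Fin d) F := α • (-(ss r p)) + β • ss q r with hydef
  have hysym : yᵀ = y := by
    rw [hydef, transpose_add, transpose_smul, transpose_smul, transpose_neg, ss_transpose,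
      ss_transpose]
  have hypr : y p r = -α := by
    rw [hydef, Matrix.add_apply, Matrix.smul_apply, Matrix.smul_apply, Matrix.neg_apply,
      ss_apply, ss_apply]
    simp [hpq, hrp.symm, hrq.symm, hrp, hrq]
  have hyqr : y q r = β := by
    rw [hydef, Matrix.add_apply, Matrix.smul_apply, Matrix.smul_apply, Matrix.neg_apply,
      ss_apply, ss_apply]
    simp [hpq.symm, hrp, hrq]
  have hypp : y p p = 0 := by
    rw [hydef, Matrix.add_apply, Matrix.smul_apply, Matrix.smul_apply, Matrix.neg_apply,
      ss_apply, ss_apply]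
    simp [hpq, hrp, hrq, hpq.symm, hrp.symm, hrq.symm]
  have hyqq : y q q = 0 := by
    rw [hydef, Matrix.add_apply, Matrix.smul_apply, Matrix.smul_apply, Matrix.neg_apply,
      ss_apply, ss_apply]
    simp [hpq, hrp, hrq, hpq.symm, hrp.symm, hrq.symm]
  have hyrr : y r r = 0 := by
    rw [hydef, Matrix.add_apply, Matrix.smul_apply, Matrix.smul_apply, Matrix.neg_apply,
      ss_apply, ss_apply]
    simp [hpq, hrp, hrq, hpq.symm, hrp.symm, hrq.symm]
  rcases hne with hne | hne
  · -- α ≠ 0, project at (p, r)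
    have hα0 : α ≠ 0 := mul_ne_zero h12 hne
    have hzL : adk p r (adk p r (adk p r (adk p r y) + y)) ∈ L := by
      apply adk_mem hL
      apply adk_mem hL
      exact L.add_mem (adk_mem hL (adk_mem hL hyL p r) p r) hyL
    rw [sym_project p r hrp.symm hysym, hypr, hypp, hyrr] at hzL
    refine ⟨p, r, hrp.symm, ?_⟩
    have hc : (12 * -α : F) ≠ 0 := by
      apply mul_ne_zero h12 (neg_ne_zero.2 hα0)
    rw [sub_self, mul_zero, zero_smul, add_zero] at hzL
    have := L.smul_mem (12 * -α : F)⁻¹ hzL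
    rwa [smul_smul, inv_mul_cancel₀ hc, one_smul] at this
  · -- β ≠ 0, project at (q, r)
    have hβ0 : β ≠ 0 := mul_ne_zero h6 (sub_ne_zero.2 hne)
    have hzL : adk q r (adk q r (adk q r (adk q r y) + y)) ∈ L := by
      apply adk_mem hL
      apply adk_mem hL
      exact L.add_mem (adk_mem hL (adk_mem hL hyL q r) q r) hyL
    rw [sym_project q r hrq.symm hysym, hyqr, hyqq, hyrr] at hzL
    refine ⟨q, r, hrq.symm, ?_⟩
    have hc : (12 * β : F) ≠ 0 := mul_ne_zero h12 hβ0
    rw [sub_self, mul_zero, zero_smul, add_zero] at hzL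
    have := L.smul_mem (12 * β : F)⁻¹ hzL
    rwa [smul_smul, inv_mul_cancel₀ hc, one_smul] at this

/-- extraction of a `kk` generator from an element of `L` with nonzero skew part -/
lemma extract_kk (h2 : (2:F) ≠ 0) (h4 : (4:F) ≠ 0) (hd2 : d ≠ 2) (hd4 : d ≠ 4)
    (hL : ∀ l ∈ L, ∀ k : Matrix (Fin d) (Fin d) F, kᵀ = -k → l * k - k * l ∈ L)
    {l : Matrix (Fin d) (Fin d) F} (hl : l ∈ L) (hne : l - lᵀ ≠ 0) :
    ∃ a b : Fin d, a ≠ b ∧ (kk a b : Matrix (Fin d) (Fin d) F) ∈ L := by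
  set w : Matrix (Fin d) (Fin d) F := l - lᵀ with hw
  have hwskew : wᵀ = -w := by
    rw [hw, transpose_sub, transpose_transpose]
    abel
  obtain ⟨p, q, hwpq⟩ := matrix_exists_entry_ne hne
  have hpq : p ≠ q := by
    rintro rfl
    exact hwpq (skew_diag h2 hwskew p)
  have hvL : w + l.trace • 1 ∈ L := by
    have h5 := L.sub_mem hl (tau_mem h4 hL hl)
    rwa [show l - (lᵀ - l.trace • 1) = w + l.trace • 1 by rw [hw]; abel] at h5
  have hd35 : d = 3 ∨ 5 ≤ d := by
    have h1 : 1 < Fintype.card (Fin d) := Fintype.one_lt_card_iff_nontrivial.2 ⟨⟨p, q, hpq⟩⟩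
    rw [Fintype.card_fin] at h1
    omega
  have e0 : adk p q (adk p q (w + l.trace • 1)) = adk p q (adk p q w) := by
    rw [adk_add, adk_one, add_zero]
  rcases hd35 with hd3 | hd5
  · -- d = 3
    obtain ⟨r, hr⟩ := exists_notin {p, q} (by
      have : ({p, q} : Finset (Fin d)).card ≤ 2 := by
        apply le_trans (Finset.card_insert_le _ _); simp
      omega)
    have hrp : r ≠ p := fun hh => hr (by simp [hh])
    have hrq : r ≠ q := fun hh => hr (by simp [hh])
    have hall : ∀ c : Fin d, c = p ∨ c = q ∨ c = r := by
      intro c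
      by_contra hc
      push_neg at hc
      obtain ⟨hcp, hcq, hcr⟩ := hc
      have hcard : ({p, q, r, c} : Finset (Fin d)).card = 4 := by
        rw [Finset.card_insert_of_notMem (by simp [hpq, hrp.symm, Ne.symm hcp]),
          Finset.card_insert_of_notMem (by simp [hrq.symm, Ne.symm hcq]),
          Finset.card_insert_of_notMem (by simp [Ne.symm hcr])]
        simp
      have := Finset.card_le_univ ({p, q, r, c} : Finset (Fin d))
      rw [hcard, Fintype.card_fin] at this
      omega
    have hchain := chain_d3 p q r hpq (Ne.symm hrp) (Ne.symm hrq) hall h2 hwskew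
    have hXL : (w + l.trace • 1) + adk p q (adk p q (w + l.trace • 1)) ∈ L :=
      L.add_mem hvL (adk_mem hL (adk_mem hL hvL p q) p q)
    rw [e0, show (w + l.trace • 1) + adk p q (adk p q w)
        = (w + adk p q (adk p q w)) + l.trace • 1 by abel, hchain] at hXL
    have hyL := adk_mem hL hXL p r
    rw [adk_add, adk_one, add_zero, adk_smul, br_kk2 (Ne.symm hrp) hrq hpq] at hyL
    refine ⟨r, q, hrq, ?_⟩
    rw [smul_neg, ← neg_smul] at hyL
    have hc : (-(w p q) : F) ≠ 0 := neg_ne_zero.2 hwpq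
    have := L.smul_mem (-(w p q) : F)⁻¹ hyL
    rwa [smul_smul, inv_mul_cancel₀ hc, one_smul] at this
  · -- d ≥ 5
    obtain ⟨r, hr⟩ := exists_notin {p, q} (by
      have : ({p, q} : Finset (Fin d)).card ≤ 2 := by
        apply le_trans (Finset.card_insert_le _ _); simp
      omega)
    obtain ⟨r', hr'⟩ := exists_notin {p, q, r} (by
      have : ({p, q, r} : Finset (Fin d)).card ≤ 3 := by
        apply le_trans (Finset.card_insert_le _ _)
        have : ({q, r} : Finset (Fin d)).card ≤ 2 := by
          apply le_trans (Finset.card_insert_le _ _); simp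
        omega
      omega)
    obtain ⟨r'', hr''⟩ := exists_notin {p, q, r, r'} (by
      have h3 : ({p, q, r, r'} : Finset (Fin d)).card ≤ 4 := by
        apply le_trans (Finset.card_insert_le _ _)
        have h4' : ({q, r, r'} : Finset (Fin d)).card ≤ 3 := by
          apply le_trans (Finset.card_insert_le _ _)
          have : ({r, r'} : Finset (Fin d)).card ≤ 2 := by
            apply le_trans (Finset.card_insert_le _ _); simp
          omega
        omega
      omega)
    have hpr : p ≠ r := fun hh => hr (by simp [hh.symm])
    have hqr : q ≠ r := fun hh => hr (by simp [hh.symm])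
    have hpr' : p ≠ r' := fun hh => hr' (by simp [hh.symm])
    have hqr' : q ≠ r' := fun hh => hr' (by simp [hh.symm])
    have hrr' : r ≠ r' := fun hh => hr' (by simp [hh.symm])
    have hpr'' : p ≠ r'' := fun hh => hr'' (by simp [hh.symm])
    have hqr'' : q ≠ r'' := fun hh => hr'' (by simp [hh.symm])
    have hrr'' : r ≠ r'' := fun hh => hr'' (by simp [hh.symm])
    have hr'r'' : r' ≠ r'' := fun hh => hr'' (by simp [hh.symm])
    have hchain := chain_d5 p q r r' r'' hpq hpr hpr' hpr'' hqr hqr' hqr''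
      hrr' hrr'' hr'r'' h2 hwskew
    have e1 : adk p r ((w + l.trace • 1) + adk p q (adk p q w))
        = adk p r (w + adk p q (adk p q w)) := by
      rw [show (w + l.trace • 1) + adk p q (adk p q w)
          = (w + adk p q (adk p q w)) + l.trace • 1 by abel, adk_add, adk_one, add_zero]
    have hXL : (w + l.trace • 1) + adk p q (adk p q (w + l.trace • 1)) ∈ L :=
      L.add_mem hvL (adk_mem hL (adk_mem hL hvL p q) p q)
    rw [e0] at hXL
    have hM2L : -(adk p r (adk p r ((w + l.trace • 1) + adk p q (adk p q w)))) ∈ L :=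
      L.neg_mem (adk_mem hL (adk_mem hL hXL p r) p r)
    rw [e1] at hM2L
    have hM3L : -(adk p r' (adk p r'
        (-(adk p r (adk p r (w + adk p q (adk p q w))))))) ∈ L :=
      L.neg_mem (adk_mem hL (adk_mem hL hM2L p r') p r')
    have hVL : -(adk p r'' (adk p r'' (-(adk p r' (adk p r'
        (-(adk p r (adk p r (w + adk p q (adk p q w)))))))))) ∈ L :=
      L.neg_mem (adk_mem hL (adk_mem hL hM3L p r'') p r'')
    rw [hchain] at hVL
    refine ⟨p, q, hpq, ?_⟩
    have := L.smul_mem (w p q : F)⁻¹ hVL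
    rwa [smul_smul, inv_mul_cancel₀ hwpq, one_smul] at this

end Main

lemma comm_skew_skew {l k : Matrix (Fin d) (Fin d) F} (hl : lᵀ = -l) (hk : kᵀ = -k) :
    (l * k - k * l)ᵀ = -(l * k - k * l) := by
  rw [transpose_sub, transpose_mul, transpose_mul, hl, hk]
  simp only [neg_mul, mul_neg, neg_neg]
  abel

lemma comm_sym_skew {l k : Matrix (Fin d) (Fin d) F} (hl : lᵀ = l) (hk : kᵀ = -k) :
    (l * k - k * l)ᵀ = l * k - k * l := by
  rw [transpose_sub, transpose_mul, transpose_mul, hl, hk]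
  simp only [neg_mul, mul_neg]
  abel

lemma trace_comm_zero (a b : Matrix (Fin d) (Fin d) F) : (a * b - b * a).trace = 0 := by
  rw [Matrix.trace_sub, Matrix.trace_mul_comm, sub_self]

lemma EEpp_sym (p : Fin d) : (EE p p : Matrix (Fin d) (Fin d) F)ᵀ = EE p p := EE_transpose p p

lemma ss_eq_comm (p q : Fin d) (hpq : p ≠ q) :
    (ss p q : Matrix (Fin d) (Fin d) F) = EE p p * kk p q - kk p q * EE p p := by
  simp only [kk, ss, mul_sub, sub_mul, EE_mul_EE, if_pos rfl, if_neg hpq, if_neg hpq.symm]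
  abel

lemma hh_eq_comm (p q : Fin d) (hpq : p ≠ q) (h2 : (2:F) ≠ 0) :
    (hh p q : Matrix (Fin d) (Fin d) F)
      = (-(2:F)⁻¹) • (ss p q * kk p q - kk p q * ss p q) := by
  have h1 : (ss p q : Matrix (Fin d) (Fin d) F) * kk p q - kk p q * ss p q
      = -(adk p q (ss p q)) := by rw [adk]; abel
  rw [h1, br_kss hpq, smul_neg, neg_smul, neg_neg, smul_smul, inv_mul_cancel₀ h2, one_smul]

lemma EE_eq_comm (p q : Fin d) (hpq : p ≠ q) :
    (EE p q : Matrix (Fin d) (Fin d) F) = EE p p * EE p q - EE p q * EE p p := by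
  rw [EE_mul_EE, EE_mul_EE, if_pos rfl, if_neg hpq.symm, sub_zero]

lemma hh_eq_comm' (p q : Fin d) (hpq : p ≠ q) :
    (hh p q : Matrix (Fin d) (Fin d) F) = EE p q * EE q p - EE q p * EE p q := by
  rw [EE_mul_EE, EE_mul_EE, if_pos rfl, if_pos rfl, hh]

lemma char_ne_zero_of_ringChar (p : ℕ) (hp : p.Prime) (h : ringChar F ≠ p) : (p : F) ≠ 0 := by
  intro h0
  have hdvd : ringChar F ∣ p := (CharP.cast_eq_zero_iff F (ringChar F) p).mp h0
  rcases (Nat.dvd_prime hp).mp hdvd with h1 | h1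
  · exact CharP.ringChar_ne_one h1
  · exact h h1

end Stmt5Aux
open Stmt5Aux in
/-- **Lemma 3.6.** -/
theorem stmt_5 (F : Type*) [Field F] (hchar2 : ringChar F ≠ 2) (hchar3 : ringChar F ≠ 3)
    (d : ℕ) (hd : 0 < d) (hd2 : d ≠ 2) (hd4 : d ≠ 4)
    (L : Submodule F (Matrix (Fin d) (Fin d) F)) :
    (∀ l ∈ L, ∀ k : Matrix (Fin d) (Fin d) F, kᵀ = -k → l * k - k * l ∈ L) ↔
      (L = ⊥ ∨
       L = Submodule.span F {(1 : Matrix (Fin d) (Fin d) F)} ∨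
       (L : Set (Matrix (Fin d) (Fin d) F)) = {k | kᵀ = -k} ∨
       L = Submodule.span F
         {x : Matrix (Fin d) (Fin d) F | ∃ s k, sᵀ = s ∧ kᵀ = -k ∧ x = s * k - k * s} ∨
       (L : Set (Matrix (Fin d) (Fin d) F)) = {s | sᵀ = s} ∨
       (L : Set (Matrix (Fin d) (Fin d) F)) =
         {x | ∃ (c : F) (k : Matrix (Fin d) (Fin d) F), kᵀ = -k ∧ x = c • 1 + k} ∨
       L = Submodule.span F
         {x : Matrix (Fin d) (Fin d) F | ∃ a b, x = a * b - b * a} ∨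
       L = ⊤) := by
  classical
  have h2 : (2:F) ≠ 0 := char_ne_zero_of_ringChar 2 Nat.prime_two hchar2
  have h3 : (3:F) ≠ 0 := char_ne_zero_of_ringChar 3 Nat.prime_three hchar3
  have h4 : (4:F) ≠ 0 := by
    rw [show (4:F) = 2 * 2 by norm_num]; exact mul_ne_zero h2 h2
  have h6 : (6:F) ≠ 0 := by
    rw [show (6:F) = 2 * 3 by norm_num]; exact mul_ne_zero h2 h3
  have h12 : (12:F) ≠ 0 := by
    rw [show (12:F) = 4 * 3 by norm_num]; exact mul_ne_zero h4 h3
  constructor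
  · -- forward direction
    intro hL
    by_cases P1 : ∃ l ∈ L, l - lᵀ ≠ 0
    · -- L contains an element with nonzero skew part
      obtain ⟨l1, hl1L, hl1⟩ := P1
      obtain ⟨a, b, hab, hkkab⟩ := extract_kk h2 h4 hd2 hd4 hL hl1L hl1
      have hkkall := kk_all_mem hL hab hkkab
      have hK : ∀ w : Matrix (Fin d) (Fin d) F, wᵀ = -w → w ∈ L :=
        skew_all_mem h2 hkkall
      have hZtr : ∀ l ∈ L, l.trace • (1 : Matrix (Fin d) (Fin d) F) ∈ L := by
        intro l hl
        have h5 := L.sub_mem hl (tau_mem h4 hL hl)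
        have h6' : l - lᵀ ∈ L := hK _ (by rw [transpose_sub, transpose_transpose]; abel)
        have h7 := L.sub_mem h5 h6'
        rwa [show l - (lᵀ - l.trace • 1) - (l - lᵀ) = l.trace • 1 by abel] at h7
      have hsymdecomp : ∀ l ∈ L, l + lᵀ - l.trace • 1 ∈ L := by
        intro l hl
        have h5 := L.add_mem hl (tau_mem h4 hL hl)
        rwa [show l + (lᵀ - l.trace • 1) = l + lᵀ - l.trace • 1 by abel] at h5
      by_cases Q2 : ∃ x ∈ L, xᵀ = x ∧ ¬(∃ c : F, x = c • 1)
      · obtain ⟨x0, hx0L, hx0sym, hx0ns⟩ := Q2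
        have hex : ∃ p q, p ≠ q ∧ (x0 p q ≠ 0 ∨ x0 p p ≠ x0 q q) := by
          by_contra hcon
          push_neg at hcon
          exact hx0ns (scalar_of_entries hd fun p q hpq => hcon p q hpq)
        obtain ⟨p, q, hpq, hne⟩ := hex
        obtain ⟨a', b', hab', hss0⟩ := extract_ss h2 h12 h6 hd2 hL hx0L hx0sym hpq hne
        have hss := ss_all_mem hL hab' hss0
        have hhh := hh_all_mem h2 hL hss
        have S0L : ∀ u : Matrix (Fin d) (Fin d) F, uᵀ = u → u.trace = 0 → u ∈ L :=
          fun u hu htr => sym0_span_mem h2 hd hss hhh hu htr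
        by_cases Q3 : ∃ l ∈ L, l.trace ≠ 0
        · -- L = ⊤
          obtain ⟨l0, hl0L, hl0tr⟩ := Q3
          have h1L : (1 : Matrix (Fin d) (Fin d) F) ∈ L := by
            have h5 := L.smul_mem (l0.trace)⁻¹ (hZtr l0 hl0L)
            rwa [smul_smul, inv_mul_cancel₀ hl0tr, one_smul] at h5
          have hSym : ∀ s : Matrix (Fin d) (Fin d) F, sᵀ = s → s ∈ L := by
            by_cases hd2F : (2 - (d:F)) = 0
            · have hdF : (d:F) ≠ 0 := by
                intro h0; rw [h0, sub_zero] at hd2F; exact h2 hd2F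
              intro s hs
              have hu : (s - (s.trace * (d:F)⁻¹) • 1)ᵀ = s - (s.trace * (d:F)⁻¹) • 1 := by
                rw [transpose_sub, hs, transpose_smul, transpose_one]
              have htr : (s - (s.trace * (d:F)⁻¹) • 1).trace = 0 := by
                rw [Matrix.trace_sub, Matrix.trace_smul, Matrix.trace_one, smul_eq_mul,
                  Fintype.card_fin]
                field_simp
                ring
              have h5 := L.add_mem (S0L _ hu htr) (L.smul_mem (s.trace * (d:F)⁻¹) h1L)
              rwa [sub_add_cancel] at h5
            · intro s hs
              have hu0L : l0 + l0ᵀ - l0.trace • 1 ∈ L := hsymdecomp l0 hl0L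
              have hu0sym : (l0 + l0ᵀ - l0.trace • 1)ᵀ = l0 + l0ᵀ - l0.trace • 1 := by
                rw [transpose_sub, transpose_add, transpose_transpose, transpose_smul,
                  transpose_one]
                abel
              have hu0tr : (l0 + l0ᵀ - l0.trace • 1).trace = l0.trace * (2 - (d:F)) := by
                rw [Matrix.trace_sub, Matrix.trace_add, Matrix.trace_transpose,
                  Matrix.trace_smul, Matrix.trace_one, smul_eq_mul, Fintype.card_fin]
                ring
              have hu0tr0 : (l0 + l0ᵀ - l0.trace • 1).trace ≠ 0 := by
                rw [hu0tr]; exact mul_ne_zero hl0tr hd2F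
              set u0 : Matrix (Fin d) (Fin d) F := l0 + l0ᵀ - l0.trace • 1 with hu0
              have hu : (s - (s.trace * u0.trace⁻¹) • u0)ᵀ = s - (s.trace * u0.trace⁻¹) • u0 := by
                rw [transpose_sub, hs, transpose_smul, hu0sym]
              have htr : (s - (s.trace * u0.trace⁻¹) • u0).trace = 0 := by
                rw [Matrix.trace_sub, Matrix.trace_smul, smul_eq_mul]
                field_simp
                ring
              have h5 := L.add_mem (S0L _ hu htr) (L.smul_mem (s.trace * u0.trace⁻¹) hu0L)
              rwa [sub_add_cancel] at h5
          refine Or.inr (Or.inr (Or.inr (Or.inr (Or.inr (Or.inr (Or.inr ?_))))))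
          rw [eq_top_iff]
          intro x _
          have hx1 : x - xᵀ ∈ L := hK _ (by rw [transpose_sub, transpose_transpose]; abel)
          have hx2 : x + xᵀ ∈ L := hSym _ (by rw [transpose_add, transpose_transpose]; abel)
          have h5 := L.smul_mem (2:F)⁻¹ (L.add_mem hx1 hx2)
          rwa [show (2:F)⁻¹ • (x - xᵀ + (x + xᵀ)) = x by
            rw [show x - xᵀ + (x + xᵀ) = (2:F) • x by rw [two_smul]; abel,
              smul_smul, inv_mul_cancel₀ h2, one_smul]] at h5
        · -- L = span of commutators
          push_neg at Q3
          refine Or.inr (Or.inr (Or.inr (Or.inr (Or.inr (Or.inr (Or.inl ?_))))))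
          apply le_antisymm
          · intro l hl
            apply sl_span_mem hd ?_ ?_ (Q3 l hl)
            · intro x y hxy
              exact Submodule.subset_span ⟨EE x x, EE x y, EE_eq_comm x y hxy⟩
            · intro x y
              by_cases hxy : x = y
              · rw [hxy, hh_self]; exact Submodule.zero_mem _
              · exact Submodule.subset_span ⟨EE x y, EE y x, hh_eq_comm' x y hxy⟩
          · rw [Submodule.span_le]
            rintro g ⟨a0, b0, rfl⟩
            rw [SetLike.mem_coe]
            have hgtr : (a0 * b0 - b0 * a0).trace = 0 := trace_comm_zero a0 b0
            have hx1 : (a0 * b0 - b0 * a0) - (a0 * b0 - b0 * a0)ᵀ ∈ L :=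
              hK _ (by rw [transpose_sub, transpose_transpose]; abel)
            have hx2 : (a0 * b0 - b0 * a0) + (a0 * b0 - b0 * a0)ᵀ ∈ L := by
              refine S0L _ (by rw [transpose_add, transpose_transpose]; abel) ?_
              rw [Matrix.trace_add, Matrix.trace_transpose, hgtr, add_zero]
            have h5 := L.smul_mem (2:F)⁻¹ (L.add_mem hx1 hx2)
            rwa [show (2:F)⁻¹ • ((a0 * b0 - b0 * a0) - (a0 * b0 - b0 * a0)ᵀ
                + ((a0 * b0 - b0 * a0) + (a0 * b0 - b0 * a0)ᵀ))
                = a0 * b0 - b0 * a0 by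
              rw [show (a0 * b0 - b0 * a0) - (a0 * b0 - b0 * a0)ᵀ
                  + ((a0 * b0 - b0 * a0) + (a0 * b0 - b0 * a0)ᵀ)
                  = (2:F) • (a0 * b0 - b0 * a0) by rw [two_smul]; abel,
                smul_smul, inv_mul_cancel₀ h2, one_smul]] at h5
      · -- all symmetric elements of L are scalar
        push_neg at Q2
        have hdec : ∀ l ∈ L, ∃ c : F, (l - c • 1)ᵀ = -(l - c • 1) := by
          intro l hl
          have husym : (l + lᵀ - l.trace • 1)ᵀ = l + lᵀ - l.trace • 1 := by
            rw [transpose_sub, transpose_add, transpose_transpose, transpose_smul,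
              transpose_one]
            abel
          obtain ⟨e, he⟩ := Q2 _ (hsymdecomp l hl) husym
          refine ⟨2⁻¹ * (l.trace + e), ?_⟩
          have hlt : lᵀ = (l.trace + e) • 1 - l := by
            calc lᵀ = (l + lᵀ - l.trace • 1) + l.trace • 1 - l := by abel
              _ = e • 1 + l.trace • 1 - l := by rw [he]
              _ = (l.trace + e) • 1 - l := by rw [add_smul]; abel
          rw [transpose_sub, transpose_smul, transpose_one, hlt]
          match_scalars <;> field_simp <;> ring
        by_cases R : ∃ l ∈ L, ¬(lᵀ = -l)
        · -- L = Z + K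
          obtain ⟨l0, hl0L, hl0⟩ := R
          obtain ⟨c0, hc0⟩ := hdec l0 hl0L
          have hc0ne : c0 ≠ 0 := by
            rintro rfl
            rw [zero_smul, sub_zero] at hc0
            exact hl0 hc0
          have h1L : (1 : Matrix (Fin d) (Fin d) F) ∈ L := by
            have h5 := L.sub_mem hl0L (hK _ hc0)
            rw [show l0 - (l0 - c0 • 1) = c0 • 1 by abel] at h5
            have h7 := L.smul_mem c0⁻¹ h5
            rwa [smul_smul, inv_mul_cancel₀ hc0ne, one_smul] at h7
          refine Or.inr (Or.inr (Or.inr (Or.inr (Or.inr (Or.inl ?_)))))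
          ext x
          simp only [SetLike.mem_coe, Set.mem_setOf_eq]
          constructor
          · intro hx
            obtain ⟨c, hc⟩ := hdec x hx
            exact ⟨c, x - c • 1, hc, by abel⟩
          · rintro ⟨c, k0, hk0, rfl⟩
            exact L.add_mem (L.smul_mem c h1L) (hK _ hk0)
        · -- L = K
          push_neg at R
          refine Or.inr (Or.inr (Or.inl ?_))
          ext x
          simp only [SetLike.mem_coe, Set.mem_setOf_eq]
          exact ⟨fun hx => R x hx, fun hx => hK x hx⟩
    · -- all elements of L are symmetric
      push_neg at P1
      have hsymall : ∀ l ∈ L, lᵀ = l := by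
        intro l hl
        have := P1 l hl
        rw [sub_eq_zero] at this
        exact this.symm
      by_cases P2 : ∃ x ∈ L, ¬(∃ c : F, x = c • 1)
      · obtain ⟨x0, hx0L, hx0ns⟩ := P2
        have hx0sym := hsymall x0 hx0L
        have hex : ∃ p q, p ≠ q ∧ (x0 p q ≠ 0 ∨ x0 p p ≠ x0 q q) := by
          by_contra hcon
          push_neg at hcon
          exact hx0ns (scalar_of_entries hd fun p q hpq => hcon p q hpq)
        obtain ⟨p, q, hpq, hne⟩ := hex
        obtain ⟨a', b', hab', hss0⟩ := extract_ss h2 h12 h6 hd2 hL hx0L hx0sym hpq hne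
        have hss := ss_all_mem hL hab' hss0
        have hhh := hh_all_mem h2 hL hss
        have S0L : ∀ u : Matrix (Fin d) (Fin d) F, uᵀ = u → u.trace = 0 → u ∈ L :=
          fun u hu htr => sym0_span_mem h2 hd hss hhh hu htr
        by_cases P3 : ∃ l ∈ L, l.trace ≠ 0
        · -- L = S
          obtain ⟨l0, hl0L, hl0tr⟩ := P3
          have hl0sym := hsymall l0 hl0L
          refine Or.inr (Or.inr (Or.inr (Or.inr (Or.inl ?_))))
          ext x
          simp only [SetLike.mem_coe, Set.mem_setOf_eq]
          constructor
          · exact fun hx => hsymall x hx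
          · intro hx
            have hu : (x - (x.trace * l0.trace⁻¹) • l0)ᵀ = x - (x.trace * l0.trace⁻¹) • l0 := by
              rw [transpose_sub, hx, transpose_smul, hl0sym]
            have htr : (x - (x.trace * l0.trace⁻¹) • l0).trace = 0 := by
              rw [Matrix.trace_sub, Matrix.trace_smul, smul_eq_mul]
              field_simp
              ring
            have h5 := L.add_mem (S0L _ hu htr) (L.smul_mem (x.trace * l0.trace⁻¹) hl0L)
            rwa [sub_add_cancel] at h5
        · -- L = span [S,K]
          push_neg at P3
          refine Or.inr (Or.inr (Or.inr (Or.inl ?_)))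
          apply le_antisymm
          · intro l hl
            apply sym0_span_mem h2 hd ?_ ?_ (hsymall l hl) (P3 l hl)
            · intro x y hxy
              exact Submodule.subset_span
                ⟨EE x x, kk x y, EEpp_sym x, kk_transpose x y, ss_eq_comm x y hxy⟩
            · intro x y
              by_cases hxy : x = y
              · rw [hxy, hh_self]; exact Submodule.zero_mem _
              · rw [hh_eq_comm x y hxy h2]
                exact Submodule.smul_mem _ _ (Submodule.subset_span
                  ⟨ss x y, kk x y, ss_transpose x y, kk_transpose x y, rfl⟩)
          · rw [Submodule.span_le]
            rintro g ⟨s0, k0, hs0, hk0, rfl⟩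
            rw [SetLike.mem_coe]
            exact S0L _ (comm_sym_skew hs0 hk0) (trace_comm_zero s0 k0)
      · -- L consists of scalar matrices
        push_neg at P2
        by_cases P0 : ∃ l ∈ L, l ≠ 0
        · obtain ⟨l0, hl0L, hl0⟩ := P0
          obtain ⟨c0, rfl⟩ := P2 l0 hl0L
          have hc0 : c0 ≠ 0 := by
            rintro rfl
            exact hl0 (zero_smul _ _)
          have h1L : (1 : Matrix (Fin d) (Fin d) F) ∈ L := by
            have h5 := L.smul_mem c0⁻¹ hl0L
            rwa [smul_smul, inv_mul_cancel₀ hc0, one_smul] at h5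
          refine Or.inr (Or.inl ?_)
          apply le_antisymm
          · intro x hx
            obtain ⟨c, rfl⟩ := P2 x hx
            exact Submodule.smul_mem _ c (Submodule.mem_span_singleton_self _)
          · rw [Submodule.span_singleton_le_iff_mem]
            exact h1L
        · push_neg at P0
          left
          rw [eq_bot_iff]
          intro x hx
          rw [Submodule.mem_bot]
          exact P0 x hx
  · -- backward direction
    intro hR l hl k hk
    rcases hR with h | h | h | h | h | h | h | h
    · rw [h] at hl ⊢
      rw [Submodule.mem_bot] at hl
      rw [hl]
      simp
    · rw [h] at hl ⊢
      rw [Submodule.mem_span_singleton] at hl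
      obtain ⟨c, rfl⟩ := hl
      rw [show (c • (1 : Matrix (Fin d) (Fin d) F)) * k - k * (c • 1) = 0 by
        rw [smul_mul_assoc, one_mul, mul_smul_comm, mul_one, sub_self]]
      exact Submodule.zero_mem _
    · have hl' : lᵀ = -l := by
        have : l ∈ (L : Set (Matrix (Fin d) (Fin d) F)) := hl
        rw [h] at this
        exact this
      show l * k - k * l ∈ L
      rw [← SetLike.mem_coe, h]
      exact comm_skew_skew hl' hk
    · rw [h] at hl ⊢
      induction hl using Submodule.span_induction with
      | mem x hx =>
        obtain ⟨s0, k0, hs0, hk0, rfl⟩ := hx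
        exact Submodule.subset_span ⟨_, k, comm_sym_skew hs0 hk0, hk, rfl⟩
      | zero => simp
      | add x y hx hy ihx ihy =>
        rw [show (x + y) * k - k * (x + y) = (x * k - k * x) + (y * k - k * y) by
          rw [add_mul, mul_add]; abel]
        exact Submodule.add_mem _ ihx ihy
      | smul c x hx ihx =>
        rw [show (c • x) * k - k * (c • x) = c • (x * k - k * x) by
          rw [smul_mul_assoc, mul_smul_comm, smul_sub]]
        exact Submodule.smul_mem _ _ ihx
    · have hl' : lᵀ = l := by
        have : l ∈ (L : Set (Matrix (Fin d) (Fin d) F)) := hl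
        rw [h] at this
        exact this
      show l * k - k * l ∈ L
      rw [← SetLike.mem_coe, h]
      exact comm_sym_skew hl' hk
    · have hl' : l ∈ (L : Set (Matrix (Fin d) (Fin d) F)) := hl
      rw [h] at hl'
      obtain ⟨c, k0, hk0, rfl⟩ := hl'
      show _ ∈ L
      rw [← SetLike.mem_coe, h]
      refine ⟨0, (c • 1 + k0) * k - k * (c • 1 + k0), ?_, by rw [zero_smul, zero_add]⟩
      rw [show (c • (1 : Matrix (Fin d) (Fin d) F) + k0) * k - k * (c • 1 + k0)
          = k0 * k - k * k0 by
        rw [add_mul, mul_add, smul_mul_assoc, one_mul, mul_smul_comm, mul_one]; abel]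
      exact comm_skew_skew hk0 hk
    · rw [h] at hl ⊢
      induction hl using Submodule.span_induction with
      | mem x hx =>
        exact Submodule.subset_span ⟨x, k, rfl⟩
      | zero => simp
      | add x y hx hy ihx ihy =>
        rw [show (x + y) * k - k * (x + y) = (x * k - k * x) + (y * k - k * y) by
          rw [add_mul, mul_add]; abel]
        exact Submodule.add_mem _ ihx ihy
      | smul c x hx ihx =>
        rw [show (c • x) * k - k * (c • x) = c • (x * k - k * x) by
          rw [smul_mul_assoc, mul_smul_comm, smul_sub]]
        exact Submodule.smul_mem _ _ ihx
    · rw [h]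
      exact Submodule.mem_top
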